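/- Let H ≥ 0 be a real number and define the quadratic polynomial p_C(x) = (H²+1)x² − (1+2HC)x + C² for a real parameter C, and set x⁻ = (H − √(H²+1))/2 and x⁺ = (H + √(H²+1))/2. Then: (i) p_C has a real root if and only if x⁻ ≤ C ≤ x⁺; (ii) if x⁻ ≤ C ≤ x⁺, then both (real) roots of p_C are nonnegative; (iii) p_C has a double root if and only if C = x⁻ or C = x⁺. -/

import Mathlib

/-- Root analysis of the polynomial `p_C(x) = (H²+1)x² − (1+2HC)x + C²` governing
rotational cmc `H` surfaces in `S³`. -/
theorem stmt_0 (H C : ℝ) (hH : 0 ≤ H)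
    (p : ℝ → ℝ) (hp : ∀ x, p x = (H ^ 2 + 1) * x ^ 2 - (1 + 2 * H * C) * x + C ^ 2)
    (xm xp : ℝ) (hxm : xm = (H - Real.sqrt (H ^ 2 + 1)) / 2)
    (hxp : xp = (H + Real.sqrt (H ^ 2 + 1)) / 2) :
    ((∃ x : ℝ, p x = 0) ↔ xm ≤ C ∧ C ≤ xp) ∧
    ((xm ≤ C ∧ C ≤ xp) → ∀ x : ℝ, p x = 0 → 0 ≤ x) ∧
    ((∃ x : ℝ, p x = 0 ∧ deriv p x = 0) ↔ (C = xm ∨ C = xp)) := by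
  set s := Real.sqrt (H ^ 2 + 1) with hs
  have hs2 : s ^ 2 = H ^ 2 + 1 := Real.sq_sqrt (by positivity)
  have hs_pos : 0 < s := Real.sqrt_pos.2 (by positivity)
  have hsH : H < s := by nlinarith
  have ha : (0:ℝ) < H ^ 2 + 1 := by positivity
  have hderiv : ∀ x, deriv p x = 2 * (H ^ 2 + 1) * x - (1 + 2 * H * C) := by
    intro x
    have hpf : p = fun x => (H ^ 2 + 1) * x ^ 2 - (1 + 2 * H * C) * x + C ^ 2 :=
      funext hp
    rw [hpf]
    have h1 : HasDerivAt (fun x : ℝ => (H ^ 2 + 1) * x ^ 2 - (1 + 2 * H * C) * x + C ^ 2)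
        (2 * (H ^ 2 + 1) * x - (1 + 2 * H * C)) x := by
      have := (((hasDerivAt_pow 2 x).const_mul (H ^ 2 + 1)).sub
        ((hasDerivAt_id x).const_mul (1 + 2 * H * C))).add_const (C ^ 2)
      refine this.congr_deriv ?_
      push_cast
      ring
    exact h1.deriv
  refine ⟨⟨?_, ?_⟩, ?_, ⟨?_, ?_⟩⟩
  · rintro ⟨x, hx⟩
    rw [hp] at hx
    have key : (2 * C - H) ^ 2 ≤ s ^ 2 := by
      nlinarith [sq_nonneg (2 * (H ^ 2 + 1) * x - (1 + 2 * H * C))]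
    constructor
    · rw [hxm]; nlinarith [sq_nonneg (2 * C - H + s)]
    · rw [hxp]; nlinarith [sq_nonneg (2 * C - H - s)]
  · rintro ⟨h1, h2⟩
    rw [hxm] at h1; rw [hxp] at h2
    have hD : 0 ≤ 1 + 4 * H * C - 4 * C ^ 2 := by nlinarith
    set t := Real.sqrt (1 + 4 * H * C - 4 * C ^ 2) with ht
    have ht2 : t ^ 2 = 1 + 4 * H * C - 4 * C ^ 2 := Real.sq_sqrt hD
    refine ⟨(1 + 2 * H * C + t) / (2 * (H ^ 2 + 1)), ?_⟩
    rw [hp]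
    field_simp
    nlinarith [ht2]
  · rintro ⟨h1, h2⟩ x hx
    rw [hxm] at h1
    rw [hp] at hx
    have hb : 0 ≤ 1 + 2 * H * C := by
      nlinarith [mul_nonneg hH (by linarith : (0:ℝ) ≤ 2 * C - (H - s)),
        mul_nonneg hs_pos.le (sub_nonneg.2 hsH.le)]
    by_contra hx'
    push_neg at hx'
    nlinarith [mul_nonneg hb (neg_nonneg.2 hx'.le), sq_nonneg C,
      mul_pos (mul_pos ha (neg_pos.2 hx')) (neg_pos.2 hx')]
  · rintro ⟨x, hx, hdx⟩
    rw [hp] at hx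
    rw [hderiv x] at hdx
    have hsq : (2 * C - H - s) * (2 * C - H + s) = 0 := by nlinarith
    rcases mul_eq_zero.1 hsq with h | h
    · right; rw [hxp]; linarith
    · left; rw [hxm]; linarith
  · intro h
    have hD0 : 1 + 4 * H * C - 4 * C ^ 2 = 0 := by
      rcases h with h | h
      · rw [hxm] at h; nlinarith
      · rw [hxp] at h; nlinarith
    refine ⟨(1 + 2 * H * C) / (2 * (H ^ 2 + 1)), ?_, ?_⟩
    · rw [hp]; field_simp; nlinarith
    · rw [hderiv]; field_simp; ring
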